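/- Let K and E be full-dimensional convex bodies in ℝⁿ and let −r(K;E) < λ₁ < ∞. If K_{λ₁} is homothetic to a tangential body of E, then for every λ ∈ (−r(K;E), λ₁] the parallel body K_λ is homothetic to K_{λ₁}. -/

import Mathlib

open scoped Pointwise RealInnerProductSpace
open Metric MeasureTheory

/-- Euclidean n-space. -/
abbrev Eucl (n : ℕ) := EuclideanSpace ℝ (Fin n)

/-- Support function h_K(u) = sup {⟨x,u⟩ : x ∈ K}. -/
noncomputable def suppFn {n : ℕ} (K : Set (Eucl n)) (u : Eucl n) : ℝ :=
  sSup ((fun x => (inner ℝ x u : ℝ)) '' K)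

/-- Closed halfspace H⁻_{u,α} = {x : ⟨x,u⟩ ≤ α}. -/
def halfspace {n : ℕ} (u : Eucl n) (α : ℝ) : Set (Eucl n) := {x | (inner ℝ x u : ℝ) ≤ α}

/-- Minkowski difference M ∼ N = {x : N + x ⊆ M}. -/
def mdiff {n : ℕ} (M N : Set (Eucl n)) : Set (Eucl n) := {x | N + {x} ⊆ M}

/-- Relative inradius r(K;E) = sup {r ≥ 0 : ∃ x, x + r•E ⊆ K}. -/
noncomputable def inradius {n : ℕ} (K E : Set (Eucl n)) : ℝ :=
  sSup {r : ℝ | 0 ≤ r ∧ ∃ x : Eucl n, r • E + {x} ⊆ K}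

/-- Inner (λ ≤ 0) and outer (λ ≥ 0) parallel bodies K_λ of K relative to E. -/
noncomputable def parallelBody {n : ℕ} (K E : Set (Eucl n)) (l : ℝ) : Set (Eucl n) :=
  if l ≤ 0 then mdiff K (|l| • E) else K + l • E

/-- A is homothetic to B: A = α•B + x for some α > 0 and x. -/
def Homothetic {n : ℕ} (A B : Set (Eucl n)) : Prop :=
  ∃ α : ℝ, 0 < α ∧ ∃ x : Eucl n, A = α • B + {x}

/-- The hyperplane {x : ⟨x,u⟩ = α} supports M: it meets M and M lies in one of the
two closed halfspaces bounded by it. -/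
def SupportsHyp {n : ℕ} (u : Eucl n) (α : ℝ) (M : Set (Eucl n)) : Prop :=
  (M ∩ {x | (inner ℝ x u : ℝ) = α}).Nonempty ∧
    (M ⊆ {x | (inner ℝ x u : ℝ) ≤ α} ∨ M ⊆ {x | α ≤ (inner ℝ x u : ℝ)})

/-- K is a tangential body of E: E ⊆ K and through every boundary point of K there is a
supporting hyperplane of K that also supports E. -/
def IsTangentialBody {n : ℕ} (K E : Set (Eucl n)) : Prop :=
  E ⊆ K ∧ ∀ p ∈ frontier K, ∃ u : Eucl n, u ≠ 0 ∧ ∃ α : ℝ,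
    (inner ℝ p u : ℝ) = α ∧ SupportsHyp u α K ∧ SupportsHyp u α E

/-- Ω determines K: K is the intersection of the halfspaces with normals in Ω at heights h_K. -/
def Determines {n : ℕ} (Ω K : Set (Eucl n)) : Prop :=
  K = ⋂ u ∈ Ω, halfspace u (suppFn K u)

/-- The Wulff shape K(Ω,λ) = ⋂_{u ∈ Ω} H⁻_{u, h_K(u) + λ h_E(u)}. -/
noncomputable def wulff {n : ℕ} (K E Ω : Set (Eucl n)) (l : ℝ) : Set (Eucl n) :=
  ⋂ u ∈ Ω, halfspace u (suppFn K u + l * suppFn E u)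

/-- E^Ω = ⋂_{u ∈ Ω} H⁻_{u, h_E(u)}. -/
noncomputable def tangBody {n : ℕ} (E Ω : Set (Eucl n)) : Set (Eucl n) :=
  ⋂ u ∈ Ω, halfspace u (suppFn E u)

lemma mem_mdiff {n : ℕ} {M N : Set (Eucl n)} {x : Eucl n} :
    x ∈ mdiff M N ↔ ∀ y ∈ N, y + x ∈ M := by
  constructor
  · intro h y hy
    exact h (Set.add_mem_add hy rfl)
  · intro h z hz
    rcases Set.mem_add.1 hz with ⟨a, ha, b, hb, rfl⟩
    rcases Set.mem_singleton_iff.1 hb with rfl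
    exact h a ha

lemma mem_add_singleton' {n : ℕ} {A : Set (Eucl n)} {x z : Eucl n} :
    z ∈ A + {x} ↔ z - x ∈ A := by
  constructor
  · intro hz
    rcases Set.mem_add.1 hz with ⟨a, ha, b, hb, rfl⟩
    rcases Set.mem_singleton_iff.1 hb with rfl
    simpa using ha
  · intro h
    have : (z - x) + x = z := by abel
    exact this ▸ Set.add_mem_add h rfl

lemma smul_set_add' {n : ℕ} (c : ℝ) (A B : Set (Eucl n)) : c • (A + B) = c • A + c • B := by
  ext z
  simp only [Set.mem_smul_set, Set.mem_add]
  constructor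
  · rintro ⟨y, ⟨a, ha, b, hb, rfl⟩, rfl⟩
    exact ⟨c • a, ⟨a, ha, rfl⟩, c • b, ⟨b, hb, rfl⟩, (smul_add c a b).symm⟩
  · rintro ⟨_, ⟨a, ha, rfl⟩, _, ⟨b, hb, rfl⟩, rfl⟩
    exact ⟨a + b, ⟨a, ha, b, hb, rfl⟩, smul_add c a b⟩

lemma sep_point {n : ℕ} {C : Set (Eucl n)} (hC : Convex ℝ C) (hCc : IsClosed C)
    {z : Eucl n} (hz : z ∉ C) :
    ∃ u : Eucl n, ∀ y ∈ C, (inner ℝ y u : ℝ) < (inner ℝ z u : ℝ) := by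
  obtain ⟨f, s, h1, h2⟩ := geometric_hahn_banach_closed_point hC hCc hz
  refine ⟨(InnerProductSpace.toDual ℝ (Eucl n)).symm f, fun y hy => ?_⟩
  have key : ∀ w : Eucl n, (inner ℝ w ((InnerProductSpace.toDual ℝ (Eucl n)).symm f) : ℝ) = f w := by
    intro w
    rw [real_inner_comm]
    exact InnerProductSpace.toDual_symm_apply
  rw [key, key]
  exact (h1 y hy).trans h2

lemma max_pt {n : ℕ} {C : Set (Eucl n)} (hC : IsCompact C) (hne : C.Nonempty) (u : Eucl n) :
    ∃ m ∈ C, ∀ y ∈ C, (inner ℝ y u : ℝ) ≤ (inner ℝ m u : ℝ) := by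
  have hcont : ContinuousOn (fun y : Eucl n => (inner ℝ y u : ℝ)) C :=
    (continuous_id.inner continuous_const).continuousOn
  obtain ⟨m, hm, hmax⟩ := hC.exists_isMaxOn hne hcont
  exact ⟨m, hm, fun y hy => hmax hy⟩

lemma mdiff_mdiff {n : ℕ} (K A B : Set (Eucl n)) :
    mdiff (mdiff K A) B = mdiff K (A + B) := by
  ext x
  simp only [mem_mdiff]
  constructor
  · intro h y hy
    rcases Set.mem_add.1 hy with ⟨a, ha, b, hb, rfl⟩
    have := h b hb a ha
    rwa [show a + (b + x) = a + b + x by abel] at this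
  · intro h b hb a ha
    have := h (a + b) (Set.add_mem_add ha hb)
    rwa [show a + b + x = a + (b + x) by abel] at this

lemma cancel₁ {n : ℕ} {K E : Set (Eucl n)}
    (hKc : IsCompact K) (hKv : Convex ℝ K) (hKne : K.Nonempty)
    (hEc : IsCompact E) (hEv : Convex ℝ E) (hEne : E.Nonempty)
    {a b : ℝ} (h0b : 0 ≤ b) (hba : b ≤ a) :
    mdiff (K + a • E) (b • E) = K + (a - b) • E := by
  have h0a : 0 ≤ a := h0b.trans hba
  apply Set.Subset.antisymm
  · intro x hx
    by_contra hxC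
    have hCc : IsCompact (K + (a - b) • E) := hKc.add (hEc.smul _)
    have hCv : Convex ℝ (K + (a - b) • E) := hKv.add (hEv.smul _)
    obtain ⟨u, hu⟩ := sep_point hCv hCc.isClosed hxC
    obtain ⟨k₀, hk₀, hk₀max⟩ := max_pt hKc hKne u
    obtain ⟨e₀, he₀, he₀max⟩ := max_pt hEc hEne u
    have hb : b • e₀ + x ∈ K + a • E := mem_mdiff.1 hx _ (Set.smul_mem_smul_set he₀)
    rcases Set.mem_add.1 hb with ⟨k, hk, w, hw, heq⟩
    rcases Set.mem_smul_set.1 hw with ⟨e, he, rfl⟩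
    have h1 : (inner ℝ (b • e₀ + x) u : ℝ) = b * (inner ℝ e₀ u : ℝ) + (inner ℝ x u : ℝ) := by
      rw [inner_add_left, real_inner_smul_left]
    have h2 : (inner ℝ (k + a • e) u : ℝ) = (inner ℝ k u : ℝ) + a * (inner ℝ e u : ℝ) := by
      rw [inner_add_left, real_inner_smul_left]
    have h3 : (inner ℝ (k₀ + (a - b) • e₀) u : ℝ)
        = (inner ℝ k₀ u : ℝ) + (a - b) * (inner ℝ e₀ u : ℝ) := by
      rw [inner_add_left, real_inner_smul_left]
    have h4 := hu _ (Set.add_mem_add hk₀ (Set.smul_mem_smul_set he₀))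
    have h5 : (inner ℝ (b • e₀ + x) u : ℝ) = (inner ℝ (k + a • e) u : ℝ) := by rw [heq]
    have h6 := hk₀max k hk
    have h7 := mul_le_mul_of_nonneg_left (he₀max e he) h0a
    rw [h3] at h4
    rw [h1, h2] at h5
    linarith
  · intro x hx
    rcases Set.mem_add.1 hx with ⟨k, hk, w, hw, rfl⟩
    rcases Set.mem_smul_set.1 hw with ⟨e, he, rfl⟩
    rw [mem_mdiff]
    intro y hy
    rcases Set.mem_smul_set.1 hy with ⟨e', he', rfl⟩
    have hmem : b • e' + (a - b) • e ∈ a • E := by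
      have hsum : a • E = b • E + (a - b) • E := by
        have := hEv.add_smul h0b (sub_nonneg.2 hba)
        rwa [show b + (a - b) = a by ring] at this
      rw [hsum]
      exact Set.add_mem_add (Set.smul_mem_smul_set he') (Set.smul_mem_smul_set he)
    have := Set.add_mem_add hk hmem
    rwa [show k + (b • e' + (a - b) • e) = b • e' + (k + (a - b) • e) by abel] at this

lemma cancel₂ {n : ℕ} {K E : Set (Eucl n)}
    (hKc : IsCompact K) (hKv : Convex ℝ K)
    (hEc : IsCompact E) (hEne : E.Nonempty)
    {a b : ℝ} (h0a : 0 ≤ a) (hab : a ≤ b) :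
    mdiff (K + a • E) (b • E) = mdiff K ((b - a) • E) := by
  apply Set.Subset.antisymm
  · intro x hx
    rw [mem_mdiff]
    intro y hy
    rcases Set.mem_smul_set.1 hy with ⟨e, he, rfl⟩
    by_contra hzK
    obtain ⟨u, hu⟩ := sep_point hKv hKc.isClosed hzK
    obtain ⟨e₀, he₀, he₀max⟩ := max_pt hEc hEne u
    have hb : b • e₀ + x ∈ K + a • E := mem_mdiff.1 hx _ (Set.smul_mem_smul_set he₀)
    rcases Set.mem_add.1 hb with ⟨k, hk, w, hw, heq⟩
    rcases Set.mem_smul_set.1 hw with ⟨e₂, he₂, rfl⟩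
    have h1 : (inner ℝ (b • e₀ + x) u : ℝ) = b * (inner ℝ e₀ u : ℝ) + (inner ℝ x u : ℝ) := by
      rw [inner_add_left, real_inner_smul_left]
    have h2 : (inner ℝ (k + a • e₂) u : ℝ) = (inner ℝ k u : ℝ) + a * (inner ℝ e₂ u : ℝ) := by
      rw [inner_add_left, real_inner_smul_left]
    have h5 : (inner ℝ (b • e₀ + x) u : ℝ) = (inner ℝ (k + a • e₂) u : ℝ) := by rw [heq]
    have h6 := hu k hk
    have h7 := mul_le_mul_of_nonneg_left (he₀max e₂ he₂) h0a
    have h8 := mul_le_mul_of_nonneg_left (he₀max e he) (sub_nonneg.2 hab)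
    have h9 : (inner ℝ ((b - a) • e + x) u : ℝ)
        = (b - a) * (inner ℝ e u : ℝ) + (inner ℝ x u : ℝ) := by
      rw [inner_add_left, real_inner_smul_left]
    rw [h1, h2] at h5
    rw [h9] at h6
    linarith
  · intro x hx
    rw [mem_mdiff]
    intro y hy
    rcases Set.mem_smul_set.1 hy with ⟨e, he, rfl⟩
    have h1 : (b - a) • e + x ∈ K := mem_mdiff.1 hx _ (Set.smul_mem_smul_set he)
    have := Set.add_mem_add h1 (Set.smul_mem_smul_set he : a • e ∈ a • E)
    rwa [show (b - a) • e + x + a • e = b • e + x by rw [add_right_comm, ← add_smul, sub_add_cancel]] at this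

lemma step1 {n : ℕ} {K E : Set (Eucl n)}
    (hKc : IsCompact K) (hKv : Convex ℝ K) (hKne : K.Nonempty)
    (hEc : IsCompact E) (hEv : Convex ℝ E) (hEne : E.Nonempty)
    {l l₁ : ℝ} (hl : l < l₁) :
    parallelBody K E l = mdiff (parallelBody K E l₁) ((l₁ - l) • E) := by
  unfold parallelBody
  by_cases h1 : l₁ ≤ 0
  · have h0 : l ≤ 0 := le_of_lt (lt_of_lt_of_le hl h1)
    rw [if_pos h0, if_pos h1, mdiff_mdiff]
    congr 1
    have := hEv.add_smul (neg_nonneg.2 h1) (by linarith : (0:ℝ) ≤ l₁ - l)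
    rw [show -l₁ + (l₁ - l) = -l by ring] at this
    rw [abs_of_nonpos h0, abs_of_nonpos h1, ← this]
  · push_neg at h1
    rw [if_neg (not_le.2 h1)]
    by_cases h0 : l ≤ 0
    · rw [if_pos h0, cancel₂ hKc hKv hEc hEne h1.le (by linarith)]
      congr 1
      rw [abs_of_nonpos h0]
      ring_nf
    · push_neg at h0
      rw [if_neg (not_le.2 h0), cancel₁ hKc hKv hKne hEc hEv hEne (by linarith) (by linarith)]
      congr 1
      ring_nf

lemma segment_crosses {n : ℕ} {T : Set (Eucl n)} (hTclosed : IsClosed T) {q z : Eucl n}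
    (hq : q ∈ interior T) (hz : z ∉ T) : ∃ p ∈ segment ℝ q z, p ∈ frontier T := by
  have hpc : IsPreconnected (segment ℝ q z) := (convex_segment q z).isPreconnected
  by_contra h
  push_neg at h
  have hsub : segment ℝ q z ⊆ interior T ∪ (closure T)ᶜ := by
    intro x hx
    by_cases hxc : x ∈ closure T
    · by_cases hxi : x ∈ interior T
      · exact Or.inl hxi
      · exact absurd ⟨hxc, hxi⟩ (h x hx)
    · exact Or.inr hxc
  obtain ⟨x, hxS, hxU, hxV⟩ := hpc _ _ isOpen_interior isClosed_closure.isOpen_compl hsub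
    ⟨q, left_mem_segment ℝ q z, hq⟩
    ⟨z, right_mem_segment ℝ q z, fun hc => hz (hTclosed.closure_eq ▸ hc)⟩
  exact hxV (subset_closure (interior_subset hxU))

/-- At any point outside a tangential body there is a separating direction whose supremum on T
is attained at the level of a point of E. -/

lemma tang_sep {n : ℕ} {T E : Set (Eucl n)} (hTc : IsCompact T)
    (hTi : (interior T).Nonempty) (hTan : IsTangentialBody T E) {z : Eucl n} (hz : z ∉ T) :
    ∃ u : Eucl n, ∃ e ∈ E, (∀ w ∈ T, (inner ℝ w u : ℝ) ≤ (inner ℝ e u : ℝ)) ∧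
      (inner ℝ e u : ℝ) < (inner ℝ z u : ℝ) := by
  obtain ⟨q, hq⟩ := hTi
  obtain ⟨p, hpseg, hpf⟩ := segment_crosses hTc.isClosed hq hz
  obtain ⟨u₀, hu₀, α₀, hpα, hsT, hsE⟩ := hTan.2 p hpf
  -- orient so that T lies below
  obtain ⟨u, hu, hEe, hTle, hpu⟩ :
      ∃ u : Eucl n, u ≠ 0 ∧ (∃ e ∈ E, (inner ℝ e u : ℝ) = (inner ℝ p u : ℝ)) ∧
        (∀ w ∈ T, (inner ℝ w u : ℝ) ≤ (inner ℝ p u : ℝ)) ∧ True := by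
    obtain ⟨e, heE, heα⟩ := hsE.1
    rcases hsT.2 with hle | hge
    · exact ⟨u₀, hu₀, ⟨e, heE, by rw [heα, hpα]⟩,
        fun w hw => by rw [hpα]; exact hle hw, trivial⟩
    · refine ⟨-u₀, neg_ne_zero.2 hu₀, ⟨e, heE, ?_⟩, fun w hw => ?_, trivial⟩
      · rw [inner_neg_right, inner_neg_right, heα, hpα]
      · rw [inner_neg_right, inner_neg_right, hpα]
        exact neg_le_neg (hge hw)
  clear hpu
  obtain ⟨e, heE, heq⟩ := hEe
  refine ⟨u, e, heE, fun w hw => (hTle w hw).trans_eq heq.symm, ?_⟩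
  rw [heq]
  -- now show ⟨p,u⟩ < ⟨z,u⟩
  by_contra hzle
  push_neg at hzle
  -- interior point is strictly below
  obtain ⟨ε, hε, hball⟩ := Metric.isOpen_iff.1 isOpen_interior q hq
  have hunorm : (0:ℝ) < ‖u‖ := norm_pos_iff.2 hu
  set c : ℝ := ε / (2 * ‖u‖) with hc
  have hcpos : 0 < c := div_pos hε (by positivity)
  have hmem : q + c • u ∈ T := by
    apply interior_subset
    apply hball
    rw [mem_ball_iff_norm]
    have : q + c • u - q = c • u := by abel
    rw [this, norm_smul, Real.norm_eq_abs, abs_of_pos hcpos, hc]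
    rw [div_mul_eq_mul_div, mul_comm]
    rw [mul_div_assoc]
    calc ‖u‖ * (ε / (2 * ‖u‖)) = ε / 2 := by field_simp
      _ < ε := by linarith
  have hqlt : (inner ℝ q u : ℝ) < (inner ℝ p u : ℝ) := by
    have h1 := hTle _ hmem
    have h2 : (inner ℝ (q + c • u) u : ℝ) = (inner ℝ q u : ℝ) + c * ‖u‖ ^ 2 := by
      rw [inner_add_left, real_inner_smul_left, real_inner_self_eq_norm_sq]
    have h3 : 0 < c * ‖u‖ ^ 2 := mul_pos hcpos (pow_pos hunorm 2)
    linarith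
  -- p on the segment
  rw [segment_eq_image] at hpseg
  obtain ⟨t, ⟨ht0, ht1⟩, hteq⟩ := hpseg
  have hpz : p ∈ T := hTc.isClosed.frontier_subset hpf
  have htne : t ≠ 1 := by
    rintro rfl
    simp only [sub_self, zero_smul, one_smul, zero_add] at hteq
    exact hz (hteq ▸ hpz)
  have ht1' : t < 1 := lt_of_le_of_ne ht1 htne
  have hcombo : (inner ℝ p u : ℝ) = (1 - t) * (inner ℝ q u : ℝ) + t * (inner ℝ z u : ℝ) := by
    rw [← hteq, inner_add_left, real_inner_smul_left, real_inner_smul_left]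
  nlinarith [mul_lt_mul_of_pos_left hqlt (by linarith : (0:ℝ) < 1 - t),
    mul_le_mul_of_nonneg_left hzle ht0]

lemma mdiff_tangential {n : ℕ} {T E : Set (Eucl n)} (hTc : IsCompact T) (hTv : Convex ℝ T)
    (hTi : (interior T).Nonempty) (hTan : IsTangentialBody T E)
    {ν : ℝ} (h0 : 0 ≤ ν) (h1 : ν < 1) : mdiff T (ν • E) = (1 - ν) • T := by
  have hν : (1:ℝ) - ν ≠ 0 := by intro h; linarith [h]
  ext x
  constructor
  · intro hx
    rw [Set.mem_smul_set_iff_inv_smul_mem₀ hν]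
    by_contra hzT
    obtain ⟨u, e, heE, hmax, hlt⟩ := tang_sep hTc hTi hTan hzT
    have hm : ν • e + x ∈ T := mem_mdiff.1 hx _ (Set.smul_mem_smul_set heE)
    have h2 := hmax _ hm
    rw [inner_add_left, real_inner_smul_left] at h2
    rw [real_inner_smul_left] at hlt
    have hc : (0:ℝ) < 1 - ν := by linarith
    have h3 := mul_lt_mul_of_pos_left hlt hc
    rw [mul_inv_cancel_left₀ hν] at h3
    nlinarith
  · intro hx
    rcases Set.mem_smul_set.1 hx with ⟨w, hwT, rfl⟩
    rw [mem_mdiff]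
    intro y hy
    rcases Set.mem_smul_set.1 hy with ⟨e, heE, rfl⟩
    exact hTv (hTan.1 heE) hwT h0 (by linarith) (by ring)

lemma tang_inrad {n : ℕ} (hn : 0 < n) {T E : Set (Eucl n)} (hTc : IsCompact T)
    (hTi : (interior T).Nonempty) (hTan : IsTangentialBody T E)
    (hEi : (interior E).Nonempty) {t : ℝ} {y : Eucl n} (ht : 0 ≤ t)
    (hsub : ∀ e ∈ E, t • e + y ∈ T) : t ≤ 1 := by
  by_contra hgt
  push_neg at hgt
  obtain ⟨c, hc⟩ := hEi
  obtain ⟨δ, hδ, hballE⟩ := Metric.isOpen_iff.1 isOpen_interior c hc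
  set w := y + (t - 1) • c with hw
  obtain ⟨R, hR⟩ := hTc.isBounded.subset_closedBall 0
  have hkey : ∀ z : Eucl n, z ∉ T → ∃ u e, e ∈ E ∧
      (∀ v ∈ T, (inner ℝ v u : ℝ) ≤ (inner ℝ e u : ℝ)) ∧
      (inner ℝ e u : ℝ) < (inner ℝ z u : ℝ) ∧ (inner ℝ w u : ℝ) < 0 := by
    intro z hz
    obtain ⟨u, e, heE, hmax, hlt⟩ := tang_sep hTc hTi hTan hz
    refine ⟨u, e, heE, hmax, hlt, ?_⟩
    have hu : u ≠ 0 := by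
      rintro rfl
      simp only [inner_zero_right, lt_self_iff_false] at hlt
    have hunorm : (0:ℝ) < ‖u‖ := norm_pos_iff.2 hu
    set d : ℝ := δ / (2 * ‖u‖) with hd
    have hdpos : 0 < d := div_pos hδ (by positivity)
    have hcd : c + d • u ∈ T := by
      apply hTan.1
      apply interior_subset
      apply hballE
      rw [mem_ball_iff_norm]
      have h9 : c + d • u - c = d • u := by abel
      rw [h9, norm_smul, Real.norm_eq_abs, abs_of_pos hdpos, hd]
      rw [div_mul_eq_mul_div, mul_comm, mul_div_assoc]
      calc ‖u‖ * (δ / (2 * ‖u‖)) = δ / 2 := by field_simp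
        _ < δ := by linarith
    have h2 : (inner ℝ c u : ℝ) + d * ‖u‖ ^ 2 ≤ (inner ℝ e u : ℝ) := by
      have := hmax _ hcd
      rwa [inner_add_left, real_inner_smul_left, real_inner_self_eq_norm_sq] at this
    have h3 : t * (inner ℝ e u : ℝ) + (inner ℝ y u : ℝ) ≤ (inner ℝ e u : ℝ) := by
      have := hmax _ (hsub e heE)
      rwa [inner_add_left, real_inner_smul_left] at this
    have h4 : (inner ℝ w u : ℝ) = (inner ℝ y u : ℝ) + (t - 1) * (inner ℝ c u : ℝ) := by
      rw [hw, inner_add_left, real_inner_smul_left]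
    have h5 : (0:ℝ) < d * ‖u‖ ^ 2 := mul_pos hdpos (pow_pos hunorm 2)
    have h6 : (t - 1) * (inner ℝ c u : ℝ) ≤ (t - 1) * ((inner ℝ e u : ℝ) - d * ‖u‖ ^ 2) :=
      mul_le_mul_of_nonneg_left (by linarith) (by linarith)
    nlinarith
  by_cases hw0 : w = 0
  · have hfin : Fin n := ⟨0, hn⟩
    set z : Eucl n := EuclideanSpace.single hfin (|R| + 1) with hzdef
    have hznorm : ‖z‖ = |R| + 1 := by
      rw [hzdef, EuclideanSpace.norm_single, Real.norm_eq_abs, abs_of_pos (by positivity)]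
    have hzT : z ∉ T := by
      intro hmem
      have := mem_closedBall_zero_iff.1 (hR hmem)
      rw [hznorm] at this
      have := le_abs_self R
      linarith
    obtain ⟨u, e, _, _, _, hwu⟩ := hkey z hzT
    rw [hw0, inner_zero_left] at hwu
    exact lt_irrefl 0 hwu
  · have hwnorm : (0:ℝ) < ‖w‖ := norm_pos_iff.2 hw0
    set m : ℝ := (|R| + ‖c‖ + 1) / ‖w‖ with hm
    have hmpos : 0 < m := div_pos (by positivity) hwnorm
    have hzT : c + m • w ∉ T := by
      intro hmem
      have h1 := mem_closedBall_zero_iff.1 (hR hmem)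
      have h2 : ‖m • w‖ ≤ ‖c + m • w‖ + ‖c‖ := by
        have h3 := norm_sub_le (c + m • w) c
        rwa [show c + m • w - c = m • w by abel] at h3
      have h4 : ‖m • w‖ = |R| + ‖c‖ + 1 := by
        rw [norm_smul, Real.norm_eq_abs, abs_of_pos hmpos, hm, div_mul_cancel₀ _ hwnorm.ne']
      have h5 := le_abs_self R
      linarith
    obtain ⟨u, e, heE, hmax, hlt, hwu⟩ := hkey _ hzT
    have hcu : (inner ℝ c u : ℝ) ≤ (inner ℝ e u : ℝ) :=
      hmax c (hTan.1 (interior_subset hc))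
    have hz2 : (inner ℝ (c + m • w) u : ℝ) = (inner ℝ c u : ℝ) + m * (inner ℝ w u : ℝ) := by
      rw [inner_add_left, real_inner_smul_left]
    have : m * (inner ℝ w u : ℝ) ≤ 0 := mul_nonpos_of_nonneg_of_nonpos hmpos.le hwu.le
    rw [hz2] at hlt
    linarith

lemma mdiff_homothety {n : ℕ} (T E : Set (Eucl n)) {α : ℝ} (hα : 0 < α) (x : Eucl n) (μ : ℝ) :
    mdiff (α • T + {x}) (μ • E) = α • (mdiff T ((μ / α) • E)) + {x} := by
  have hα' : α ≠ 0 := hα.ne'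
  have hpt : ∀ e z : Eucl n, (μ / α) • e + α⁻¹ • (z - x) = α⁻¹ • (μ • e + z - x) := by
    intro e z
    match_scalars <;> field_simp
  ext z
  simp only [mem_add_singleton', Set.mem_smul_set_iff_inv_smul_mem₀ hα', mem_mdiff]
  constructor
  · intro h y hy
    rcases Set.mem_smul_set.1 hy with ⟨e, heE, rfl⟩
    have h2 := h (μ • e) (Set.smul_mem_smul_set heE)
    rw [hpt]
    exact h2
  · intro h y hy
    rcases Set.mem_smul_set.1 hy with ⟨e, heE, rfl⟩
    have h2 := h ((μ / α) • e) (Set.smul_mem_smul_set heE)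
    rw [hpt] at h2
    exact h2

lemma inrad_le {n : ℕ} (hn : 0 < n) {K E T : Set (Eucl n)}
    (hKne : K.Nonempty) (hEv : Convex ℝ E) (hEne : E.Nonempty) (hEi : (interior E).Nonempty)
    (hTc : IsCompact T) (hTi : (interior T).Nonempty) (hTan : IsTangentialBody T E)
    {l₁ α : ℝ} (hα : 0 < α) {x : Eucl n}
    (hhom : parallelBody K E l₁ = α • T + {x}) :
    inradius K E ≤ α - l₁ := by
  obtain ⟨k₀, hk₀⟩ := hKne
  apply csSup_le
  · refine ⟨0, le_refl 0, k₀, ?_⟩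
    rw [Set.zero_smul_set hEne]
    intro y hy
    rcases Set.mem_add.1 hy with ⟨a, ha, b, hb, rfl⟩
    rcases Set.mem_singleton_iff.1 hb with rfl
    rcases Set.mem_singleton_iff.1 ha with rfl
    simpa using hk₀
  · rintro s ⟨hs0, x₀, hx₀⟩
    rcases le_or_gt (s + l₁) 0 with hsl | hsl
    · linarith
    · -- (s+l₁)•E + {x₀} ⊆ parallelBody K E l₁
      have hKl : ∀ e ∈ E, (s + l₁) • e + x₀ ∈ parallelBody K E l₁ := by
        intro e he
        unfold parallelBody
        by_cases hl₁0 : l₁ ≤ 0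
        · rw [if_pos hl₁0, mem_mdiff]
          intro y hy
          rcases Set.mem_smul_set.1 hy with ⟨e', he', rfl⟩
          rw [abs_of_nonpos hl₁0]
          have hmem : (-l₁) • e' + (s + l₁) • e ∈ s • E := by
            have hsum : s • E = (-l₁) • E + (s + l₁) • E := by
              have := hEv.add_smul (neg_nonneg.2 hl₁0) hsl.le
              rwa [show -l₁ + (s + l₁) = s by ring] at this
            rw [hsum]
            exact Set.add_mem_add (Set.smul_mem_smul_set he') (Set.smul_mem_smul_set he)
          have := hx₀ (Set.add_mem_add hmem (Set.mem_singleton x₀))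
          rwa [show (-l₁) • e' + (s + l₁) • e + x₀
            = (-l₁) • e' + ((s + l₁) • e + x₀) by abel] at this
        · push_neg at hl₁0
          rw [if_neg (not_le.2 hl₁0)]
          have h1 : s • e + x₀ ∈ K :=
            hx₀ (Set.add_mem_add (Set.smul_mem_smul_set he) (Set.mem_singleton x₀))
          have := Set.add_mem_add h1 (Set.smul_mem_smul_set he : l₁ • e ∈ l₁ • E)
          rwa [show s • e + x₀ + l₁ • e = (s + l₁) • e + x₀ by
            rw [add_smul]; abel] at this
      rw [hhom] at hKl
      have hsubT : ∀ e ∈ E, ((s + l₁) / α) • e + α⁻¹ • (x₀ - x) ∈ T := by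
        intro e he
        have h2 := hKl e he
        rw [mem_add_singleton', Set.mem_smul_set_iff_inv_smul_mem₀ hα.ne'] at h2
        have hpt : ((s + l₁) / α) • e + α⁻¹ • (x₀ - x) = α⁻¹ • ((s + l₁) • e + x₀ - x) := by
          match_scalars <;> field_simp
        rw [hpt]
        exact h2
      have ht1 : (s + l₁) / α ≤ 1 :=
        tang_inrad hn hTc hTi hTan hEi (div_nonneg hsl.le hα.le) hsubT
      rw [div_le_one hα] at ht1
      linarith

/-- If K_{λ₁} is homothetic to a tangential body of E, then for every
λ ∈ (−r(K;E), λ₁] the body K_λ is homothetic to K_{λ₁}. -/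
theorem statement7 {n : ℕ} (K E : Set (Eucl n))
    (hKcomp : IsCompact K) (hKconv : Convex ℝ K) (hKint : (interior K).Nonempty)
    (hEcomp : IsCompact E) (hEconv : Convex ℝ E) (hEint : (interior E).Nonempty)
    (l₁ : ℝ) (hl₁ : -(inradius K E) < l₁)
    (hT : ∃ T : Set (Eucl n), IsCompact T ∧ Convex ℝ T ∧ (interior T).Nonempty ∧
      IsTangentialBody T E ∧ Homothetic (parallelBody K E l₁) T) :
    ∀ l : ℝ, -(inradius K E) < l → l ≤ l₁ →
      Homothetic (parallelBody K E l) (parallelBody K E l₁) := by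
  have hKne : K.Nonempty := hKint.mono interior_subset
  have hEne : E.Nonempty := hEint.mono interior_subset
  intro l hl hle
  rcases eq_or_lt_of_le hle with rfl | hlt
  · refine ⟨1, one_pos, 0, ?_⟩
    rw [one_smul, Set.add_singleton]
    simp
  · rcases Nat.eq_zero_or_pos n with hn | hn
    · -- degenerate case n = 0
      subst hn
      haveI : Subsingleton (Eucl 0) := ⟨fun a b => by ext i; exact i.elim0⟩
      have huniv : ∀ l' : ℝ, parallelBody K E l' = Set.univ := by
        intro l'
        apply Set.eq_univ_of_forall
        intro v
        unfold parallelBody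
        obtain ⟨k₀, hk₀⟩ := hKne
        split
        · rw [mem_mdiff]
          intro y hy
          have : y + v = k₀ := Subsingleton.elim _ _
          rwa [this]
        · obtain ⟨e₀, he₀⟩ := hEne
          have := Set.add_mem_add hk₀ (Set.smul_mem_smul_set he₀ : l' • e₀ ∈ l' • E)
          have h2 : k₀ + l' • e₀ = v := Subsingleton.elim _ _
          rwa [h2] at this
      refine ⟨1, one_pos, 0, ?_⟩
      rw [huniv l, huniv l₁, one_smul, Set.add_singleton]
      simp
    · obtain ⟨T, hTc, hTv, hTi, hTan, α, hα, x, hhom⟩ := hT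
      have hr : inradius K E ≤ α - l₁ :=
        inrad_le hn hKne hEconv hEne hEint hTc hTi hTan hα hhom
      have hμα : l₁ - l < α := by linarith
      set ν : ℝ := (l₁ - l) / α with hν
      have hν0 : 0 ≤ ν := div_nonneg (by linarith) hα.le
      have hν1 : ν < 1 := (div_lt_one hα).2 hμα
      have e1 : parallelBody K E l = mdiff (parallelBody K E l₁) ((l₁ - l) • E) :=
        step1 hKcomp hKconv hKne hEcomp hEconv hEne hlt
      rw [hhom, mdiff_homothety T E hα x (l₁ - l),
        mdiff_tangential hTc hTv hTi hTan hν0 hν1] at e1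
      refine ⟨1 - ν, by linarith, ν • x, ?_⟩
      rw [e1, hhom, smul_set_add' (1 - ν) (α • T) {x}, smul_smul, smul_smul,
        Set.smul_set_singleton, add_assoc, Set.singleton_add_singleton]
      rw [show (1 - ν) • x + ν • x = x by rw [← add_smul, sub_add_cancel, one_smul]]
      rw [mul_comm]
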